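/- arXiv:2504.21163 — 2 statements merged into one kernel-verified Lean document; each statement's English description precedes it below -/
import Mathlib

section
/- Let Γ be a finite abelian group acting on a Lie algebra g and on a commutative k-algebra A by automorphisms, where k is algebraically closed of characteristic 0. With Γ acting diagonally on g ⊗ A, the fixed-point Lie subalgebra (g ⊗ A)^Γ decomposes as the direct sum over characters χ ∈ Γ̂ of the subspaces g_χ ⊗ A_{χ⁻¹}, where g_χ and A_{χ⁻¹} are the corresponding isotypic components. -/
open scoped TensorProduct

section Aux

variable {k : Type*} [Field k] {Γ : Type*} [CommGroup Γ] [Fintype Γ]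

/-- Orthogonality: the sum of a nontrivial character of a finite group vanishes. -/
lemma aux_char_sum (φ : Γ →* kˣ) (h : φ ≠ 1) : ∑ γ : Γ, ((φ γ : kˣ) : k) = 0 := by
  have h1 : (Units.coeHom k).comp φ ≠ 1 := by
    intro hc
    apply h
    ext γ
    have := DFunLike.congr_fun hc γ
    simp only [MonoidHom.coe_comp, Function.comp_apply, Units.coeHom_apply,
      MonoidHom.one_apply] at this
    simpa using this
  simpa using sum_hom_units_eq_zero ((Units.coeHom k).comp φ) h1

variable {V : Type*} [AddCommGroup V] [Module k V]

/-- applying a sum of scaled automorphisms to an eigenvector. -/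
lemma aux_proj_eig (act : Γ →* (V ≃ₗ[k] V)) (φ ψ : Γ →* kˣ) (v : V)
    (hv : ∀ γ : Γ, act γ v = ((ψ γ : kˣ) : k) • v) :
    (∑ γ : Γ, ((φ γ : kˣ) : k) • ((act γ : V ≃ₗ[k] V) : V →ₗ[k] V)) v
      = (∑ γ : Γ, (((φ * ψ) γ : kˣ) : k)) • v := by
  rw [LinearMap.sum_apply, Finset.sum_smul]
  refine Finset.sum_congr rfl fun γ _ => ?_
  rw [LinearMap.smul_apply, LinearEquiv.coe_coe, hv γ, smul_smul, MonoidHom.mul_apply,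
    Units.val_mul]

/-- the range of the averaging operator consists of eigenvectors. -/
lemma aux_proj_range (act : Γ →* (V ≃ₗ[k] V)) (φ : Γ →* kˣ) (δ : Γ) (v : V) :
    act δ ((∑ γ : Γ, ((φ γ : kˣ) : k) • ((act γ : V ≃ₗ[k] V) : V →ₗ[k] V)) v)
      = (((φ δ)⁻¹ : kˣ) : k) •
        (∑ γ : Γ, ((φ γ : kˣ) : k) • ((act γ : V ≃ₗ[k] V) : V →ₗ[k] V)) v := by
  have mul_app : ∀ (e₁ e₂ : V ≃ₗ[k] V) (w : V), (e₁ * e₂) w = e₁ (e₂ w) := fun _ _ _ => rfl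
  simp only [LinearMap.sum_apply, LinearMap.smul_apply, LinearEquiv.coe_coe]
  rw [map_sum, Finset.smul_sum]
  refine Fintype.sum_equiv (Equiv.mulLeft δ) _ _ fun γ => ?_
  rw [map_smul, ← mul_app, ← map_mul]
  simp only [Equiv.coe_mulLeft, smul_smul]
  congr 1
  rw [map_mul, ← Units.val_mul, inv_mul_cancel_left]

end Aux

/-- Let `Γ` be a finite abelian group acting on a Lie algebra `g` (by Lie algebra
automorphisms) and on a commutative `k`-algebra `A` (by algebra automorphisms), `k` algebraically
closed of characteristic 0. With `Γ` acting diagonally on `g ⊗ A`, the set of fixed points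
decomposes as the direct sum, over characters `χ : Γ →* kˣ`, of the subspaces
`g_χ ⊗ A_{χ⁻¹}`: these subspaces are independent and their sum is the fixed-point subspace. -/
theorem stmt5 (k : Type*) [Field k] [IsAlgClosed k] [CharZero k]
    (Γ : Type*) [CommGroup Γ] [Fintype Γ]
    (g : Type*) [LieRing g] [LieAlgebra k g]
    (A : Type*) [CommRing A] [Algebra k A]
    (actg : Γ →* (g ≃ₗ[k] g))
    (hactg : ∀ (γ : Γ) (x y : g), actg γ ⁅x, y⁆ = ⁅actg γ x, actg γ y⁆)
    (actA : Γ →* (A ≃ₐ[k] A))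
    (S : (Γ →* kˣ) → Submodule k (g ⊗[k] A))
    (hS : ∀ χ : Γ →* kˣ, S χ = Submodule.span k
      {z : g ⊗[k] A | ∃ (x : g) (a : A),
        (∀ γ : Γ, actg γ x = (χ γ : k) • x) ∧
        (∀ γ : Γ, actA γ a = ((χ⁻¹ : Γ →* kˣ) γ : k) • a) ∧
        z = x ⊗ₜ[k] a}) :
    iSupIndep S ∧
    (↑(⨆ χ : Γ →* kˣ, S χ) =
      {z : g ⊗[k] A | ∀ γ : Γ,
        TensorProduct.map ((actg γ : g ≃ₗ[k] g) : g →ₗ[k] g) (actA γ).toLinearMap z = z}) := by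
  classical
  -- the action of Γ on A, as linear automorphisms
  let actA' : Γ →* (A ≃ₗ[k] A) :=
    { toFun := fun γ => (actA γ).toLinearEquiv
      map_one' := by ext a; simp
      map_mul' := fun γ δ => by
        ext a
        show actA (γ * δ) a = actA γ (actA δ a)
        rw [map_mul, AlgEquiv.mul_apply] }
  have hactA' : ∀ (γ : Γ) (a : A), actA' γ a = actA γ a := fun _ _ => rfl
  have hactA'L : ∀ γ : Γ, ((actA' γ : A ≃ₗ[k] A) : A →ₗ[k] A) = (actA γ).toLinearMap :=
    fun γ => rfl
  -- finiteness of the character group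
  haveI : NeZero ((Monoid.exponent Γ : k)) :=
    ⟨Nat.cast_ne_zero.mpr Monoid.exponent_ne_zero_of_finite⟩
  obtain ⟨e⟩ := CommGroup.monoidHom_mulEquiv_of_hasEnoughRootsOfUnity Γ k
  haveI : Finite (Γ →* kˣ) := Finite.of_equiv Γ e.symm.toEquiv
  haveI : Fintype (Γ →* kˣ) := Fintype.ofFinite _
  set n : k := (Fintype.card Γ : k) with hn_def
  have hn : n ≠ 0 := Nat.cast_ne_zero.mpr Fintype.card_ne_zero
  set m : k := (Fintype.card (Γ →* kˣ) : k) with hm_def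
  have hm : m ≠ 0 := Nat.cast_ne_zero.mpr Fintype.card_ne_zero
  -- first orthogonality
  have horth : ∀ φ : Γ →* kˣ, ∑ γ : Γ, ((φ γ : kˣ) : k) = if φ = 1 then n else 0 := by
    intro φ
    by_cases hφ : φ = 1
    · subst hφ; simp [hn_def, Finset.card_univ]
    · rw [if_neg hφ]; exact aux_char_sum φ hφ
  -- second orthogonality
  have horth2 : ∀ γ : Γ, ∑ χ : Γ →* kˣ, ((χ γ : kˣ) : k) = if γ = 1 then m else 0 := by
    intro γ
    by_cases hγ : γ = 1
    · subst hγ; simp [hm_def, Finset.card_univ]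
    · rw [if_neg hγ]
      obtain ⟨ψ, hψ⟩ := CommGroup.exists_apply_ne_one_of_hasEnoughRootsOfUnity Γ k hγ
      let E : (Γ →* kˣ) →* k :=
        { toFun := fun χ => ((χ γ : kˣ) : k)
          map_one' := by simp
          map_mul' := fun χ₁ χ₂ => by simp }
      have hE : E ≠ 1 := by
        intro hc
        apply hψ
        have := DFunLike.congr_fun hc ψ
        simp only [MonoidHom.one_apply] at this
        exact Units.ext (by simpa [E] using this)
      simpa [E] using sum_hom_units_eq_zero E hE
  -- the projectors
  set Pg : (Γ →* kˣ) → (g →ₗ[k] g) := fun χ =>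
    n⁻¹ • ∑ γ : Γ, (((χ⁻¹ : Γ →* kˣ) γ : kˣ) : k) • ((actg γ : g ≃ₗ[k] g) : g →ₗ[k] g)
    with hPg_def
  set PA : (Γ →* kˣ) → (A →ₗ[k] A) := fun χ =>
    n⁻¹ • ∑ γ : Γ, ((χ γ : kˣ) : k) • ((actA' γ : A ≃ₗ[k] A) : A →ₗ[k] A) with hPA_def
  -- eigenvalue computations on generators
  have hPg_eig : ∀ (χ ψ : Γ →* kˣ) (x : g), (∀ γ : Γ, actg γ x = ((ψ γ : kˣ) : k) • x) →
      Pg χ x = if ψ = χ then x else 0 := by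
    intro χ ψ x hx
    simp only [hPg_def, LinearMap.smul_apply]
    rw [aux_proj_eig actg χ⁻¹ ψ x hx, horth (χ⁻¹ * ψ)]
    have hiff : (χ⁻¹ * ψ = 1) ↔ (ψ = χ) := by
      constructor
      · intro h
        ext γ
        have := DFunLike.congr_fun h γ
        simp only [MonoidHom.mul_apply, MonoidHom.inv_apply, MonoidHom.one_apply] at this
        exact congrArg Units.val (inv_mul_eq_one.mp this).symm
      · rintro rfl
        ext γ
        simp only [MonoidHom.mul_apply, MonoidHom.inv_apply, MonoidHom.one_apply,
          inv_mul_cancel]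
    by_cases h : ψ = χ
    · rw [if_pos (hiff.mpr h), if_pos h, smul_smul, inv_mul_cancel₀ hn, one_smul]
    · rw [if_neg (fun hc => h (hiff.mp hc)), if_neg h, zero_smul, smul_zero]
  have hPA_eig : ∀ (χ ψ : Γ →* kˣ) (a : A),
      (∀ γ : Γ, actA γ a = (((ψ⁻¹ : Γ →* kˣ) γ : kˣ) : k) • a) →
      PA χ a = if ψ = χ then a else 0 := by
    intro χ ψ a ha
    simp only [hPA_def, LinearMap.smul_apply]
    rw [aux_proj_eig actA' χ ψ⁻¹ a (fun γ => ha γ), horth (χ * ψ⁻¹)]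
    have hiff : (χ * ψ⁻¹ = 1) ↔ (ψ = χ) := by
      constructor
      · intro h
        ext γ
        have := DFunLike.congr_fun h γ
        simp only [MonoidHom.mul_apply, MonoidHom.inv_apply, MonoidHom.one_apply] at this
        exact congrArg Units.val (mul_inv_eq_one.mp this).symm
      · rintro rfl
        ext γ
        simp only [MonoidHom.mul_apply, MonoidHom.inv_apply, MonoidHom.one_apply,
          mul_inv_cancel]
    by_cases h : ψ = χ
    · rw [if_pos (hiff.mpr h), if_pos h, smul_smul, inv_mul_cancel₀ hn, one_smul]
    · rw [if_neg (fun hc => h (hiff.mp hc)), if_neg h, zero_smul, smul_zero]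
  -- the range of the projectors consists of eigenvectors
  have hPg_range : ∀ (χ : Γ →* kˣ) (δ : Γ) (x : g),
      actg δ (Pg χ x) = ((χ δ : kˣ) : k) • Pg χ x := by
    intro χ δ x
    simp only [hPg_def, LinearMap.smul_apply]
    rw [map_smul, aux_proj_range actg χ⁻¹ δ x, smul_comm]
    have h1 : ((χ⁻¹ δ)⁻¹ : kˣ) = χ δ := by
      rw [MonoidHom.inv_apply, inv_inv]
    rw [h1]
  have hPA_range : ∀ (χ : Γ →* kˣ) (δ : Γ) (a : A),
      actA δ (PA χ a) = (((χ⁻¹ : Γ →* kˣ) δ : kˣ) : k) • PA χ a := by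
    intro χ δ a
    simp only [hPA_def, LinearMap.smul_apply]
    rw [← hactA' δ, map_smul, aux_proj_range actA' χ δ a, smul_comm]
    have h1 : ((χ δ)⁻¹ : kˣ) = χ⁻¹ δ := (MonoidHom.inv_apply χ δ).symm
    rw [h1]
  -- membership of projections
  have hQmem : ∀ (χ : Γ →* kˣ) (z : g ⊗[k] A),
      TensorProduct.map (Pg χ) (PA χ) z ∈ S χ := by
    intro χ z
    induction z using TensorProduct.induction_on with
    | zero => rw [map_zero]; exact (S χ).zero_mem
    | tmul x a =>
      rw [TensorProduct.map_tmul, hS χ]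
      exact Submodule.subset_span
        ⟨Pg χ x, PA χ a, fun γ => hPg_range χ γ x, fun γ => hPA_range χ γ a, rfl⟩
    | add z w hz hw => rw [map_add]; exact (S χ).add_mem hz hw
  -- the projector fixes S χ
  have hfix : ∀ (χ : Γ →* kˣ), ∀ z ∈ S χ, TensorProduct.map (Pg χ) (PA χ) z = z := by
    intro χ z hz
    rw [hS χ] at hz
    induction hz using Submodule.span_induction with
    | mem z hz =>
      obtain ⟨x, a, hx, ha, rfl⟩ := hz
      rw [TensorProduct.map_tmul, hPg_eig χ χ x hx, hPA_eig χ χ a ha, if_pos rfl, if_pos rfl]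
    | zero => rw [map_zero]
    | add z w _ _ hz hw => rw [map_add, hz, hw]
    | smul t z _ hz => rw [map_smul, hz]
  -- the projector kills S ψ for ψ ≠ χ
  have hkill : ∀ (χ ψ : Γ →* kˣ), ψ ≠ χ → ∀ z ∈ S ψ,
      TensorProduct.map (Pg χ) (PA χ) z = 0 := by
    intro χ ψ hψχ z hz
    rw [hS ψ] at hz
    induction hz using Submodule.span_induction with
    | mem z hz =>
      obtain ⟨x, a, hx, ha, rfl⟩ := hz
      rw [TensorProduct.map_tmul, hPg_eig χ ψ x hx, if_neg hψχ, TensorProduct.zero_tmul]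
    | zero => rw [map_zero]
    | add z w _ _ hz hw => rw [map_add, hz, hw, add_zero]
    | smul t z _ hz => rw [map_smul, hz, smul_zero]
  constructor
  · -- independence
    intro χ
    rw [Submodule.disjoint_def]
    intro z hz1 hz2
    have hker : (⨆ ψ, ⨆ (_ : ψ ≠ χ), S ψ) ≤
        LinearMap.ker (TensorProduct.map (Pg χ) (PA χ)) :=
      iSup_le fun ψ => iSup_le fun hψ z hz => LinearMap.mem_ker.mpr (hkill χ ψ hψ z hz)
    have h0 : TensorProduct.map (Pg χ) (PA χ) z = 0 := LinearMap.mem_ker.mp (hker hz2)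
    rw [← hfix χ z hz1, h0]
  · -- fixed points
    let F : Submodule k (g ⊗[k] A) :=
      { carrier := {z : g ⊗[k] A | ∀ γ : Γ,
          TensorProduct.map ((actg γ : g ≃ₗ[k] g) : g →ₗ[k] g) (actA γ).toLinearMap z = z}
        add_mem' := fun hz hw γ => by rw [map_add, hz γ, hw γ]
        zero_mem' := fun γ => map_zero _
        smul_mem' := fun t z hz γ => by rw [map_smul, hz γ] }
    suffices h : (⨆ χ : Γ →* kˣ, S χ) = F by rw [h]; rfl
    -- key operator identity
    have key : (∑ χ : Γ →* kˣ, TensorProduct.map (Pg χ) (PA χ))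
        = (m * (n⁻¹ * n⁻¹)) • ∑ γ : Γ,
            TensorProduct.map ((actg γ : g ≃ₗ[k] g) : g →ₗ[k] g) (actA γ).toLinearMap := by
      apply TensorProduct.ext'
      intro x a
      rw [LinearMap.sum_apply, LinearMap.smul_apply, LinearMap.sum_apply, Finset.smul_sum]
      have lhs : ∀ χ : Γ →* kˣ, TensorProduct.map (Pg χ) (PA χ) (x ⊗ₜ[k] a)
          = (n⁻¹ * n⁻¹) • ∑ γ : Γ, ∑ δ : Γ,
              ((((χ⁻¹ : Γ →* kˣ) γ : kˣ) : k) * ((χ δ : kˣ) : k)) •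
                (actg γ x ⊗ₜ[k] actA δ a) := by
        intro χ
        rw [TensorProduct.map_tmul]
        simp only [hPg_def, hPA_def, LinearMap.smul_apply, LinearMap.sum_apply,
          LinearEquiv.coe_coe]
        rw [TensorProduct.tmul_smul, ← TensorProduct.smul_tmul', smul_smul,
          TensorProduct.sum_tmul]
        rw [show (n⁻¹ * n⁻¹) • ∑ γ : Γ, ∑ δ : Γ,
              ((((χ⁻¹ : Γ →* kˣ) γ : kˣ) : k) * ((χ δ : kˣ) : k)) •
                (actg γ x ⊗ₜ[k] actA δ a)
            = ∑ γ : Γ, (n⁻¹ * n⁻¹) • ∑ δ : Γ,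
              ((((χ⁻¹ : Γ →* kˣ) γ : kˣ) : k) * ((χ δ : kˣ) : k)) •
                (actg γ x ⊗ₜ[k] actA δ a) from Finset.smul_sum, Finset.smul_sum]
        refine Finset.sum_congr rfl fun γ _ => ?_
        rw [TensorProduct.tmul_sum, Finset.smul_sum, Finset.smul_sum]
        refine Finset.sum_congr rfl fun δ _ => ?_
        rw [TensorProduct.tmul_smul, ← TensorProduct.smul_tmul', smul_smul, smul_smul,
          smul_smul]
        congr 1
        ring
      calc ∑ χ : Γ →* kˣ, TensorProduct.map (Pg χ) (PA χ) (x ⊗ₜ[k] a)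
          = (n⁻¹ * n⁻¹) • ∑ χ : Γ →* kˣ, ∑ γ : Γ, ∑ δ : Γ,
              ((((χ⁻¹ : Γ →* kˣ) γ : kˣ) : k) * ((χ δ : kˣ) : k)) •
                (actg γ x ⊗ₜ[k] actA δ a) := by
            rw [Finset.smul_sum]; exact Finset.sum_congr rfl fun χ _ => lhs χ
        _ = (n⁻¹ * n⁻¹) • ∑ γ : Γ, ∑ δ : Γ,
              (∑ χ : Γ →* kˣ, ((χ (γ⁻¹ * δ) : kˣ) : k)) • (actg γ x ⊗ₜ[k] actA δ a) := by
            rw [Finset.sum_comm]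
            congr 1
            refine Finset.sum_congr rfl fun γ _ => ?_
            rw [Finset.sum_comm]
            refine Finset.sum_congr rfl fun δ _ => ?_
            rw [Finset.sum_smul]
            refine Finset.sum_congr rfl fun χ _ => ?_
            congr 1
            rw [MonoidHom.inv_apply, map_mul, map_inv, Units.val_mul]
        _ = ∑ γ : Γ, (m * (n⁻¹ * n⁻¹)) •
              TensorProduct.map ((actg γ : g ≃ₗ[k] g) : g →ₗ[k] g) (actA γ).toLinearMap
                (x ⊗ₜ[k] a) := by
            rw [Finset.smul_sum]
            refine Finset.sum_congr rfl fun γ _ => ?_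
            have : ∀ δ : Γ, (∑ χ : Γ →* kˣ, ((χ (γ⁻¹ * δ) : kˣ) : k)) •
                (actg γ x ⊗ₜ[k] actA δ a)
                = if γ = δ then m • (actg γ x ⊗ₜ[k] actA δ a) else 0 := by
              intro δ
              rw [horth2 (γ⁻¹ * δ)]
              by_cases h : γ = δ
              · rw [if_pos h, if_pos (by rw [h, inv_mul_cancel])]
              · rw [if_neg h, if_neg (fun hc => h (inv_mul_eq_one.mp hc)), zero_smul]
            rw [Finset.sum_congr rfl fun δ _ => this δ, Finset.sum_ite_eq, if_pos
              (Finset.mem_univ γ), TensorProduct.map_tmul, smul_smul, mul_comm]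
            rfl
    apply le_antisymm
    · refine iSup_le fun χ => ?_
      rw [hS χ]
      refine Submodule.span_le.mpr ?_
      rintro z ⟨x, a, hx, ha, rfl⟩
      intro γ
      show TensorProduct.map _ _ (x ⊗ₜ[k] a) = x ⊗ₜ[k] a
      rw [TensorProduct.map_tmul]
      show actg γ x ⊗ₜ[k] actA γ a = x ⊗ₜ[k] a
      have h1 : (((χ⁻¹ : Γ →* kˣ) γ : kˣ) : k) * ((χ γ : kˣ) : k) = 1 := by
        rw [MonoidHom.inv_apply, ← Units.val_mul, inv_mul_cancel, Units.val_one]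
      rw [hx γ, ha γ, TensorProduct.tmul_smul, ← TensorProduct.smul_tmul', smul_smul, h1,
        one_smul]
    · intro z hz
      have hz' : ∀ γ : Γ,
          TensorProduct.map ((actg γ : g ≃ₗ[k] g) : g →ₗ[k] g) (actA γ).toLinearMap z = z := hz
      have h1 : ∑ χ : Γ →* kˣ, TensorProduct.map (Pg χ) (PA χ) z = (m * n⁻¹) • z := by
        have := LinearMap.congr_fun key z
        rw [LinearMap.sum_apply] at this
        rw [this, LinearMap.smul_apply, LinearMap.sum_apply]
        have : ∑ γ : Γ, TensorProduct.map ((actg γ : g ≃ₗ[k] g) : g →ₗ[k] g)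
            (actA γ).toLinearMap z = n • z := by
          rw [Finset.sum_congr rfl fun γ _ => hz' γ, Finset.sum_const, Finset.card_univ,
            hn_def]
          exact (Nat.cast_smul_eq_nsmul k _ z).symm
        rw [this, smul_smul]
        congr 1
        field_simp
      have h2 : z = ∑ χ : Γ →* kˣ, (n * m⁻¹) • TensorProduct.map (Pg χ) (PA χ) z := by
        rw [← Finset.smul_sum, h1, smul_smul]
        have : n * m⁻¹ * (m * n⁻¹) = 1 := by field_simp
        rw [this, one_smul]
      rw [h2]
      exact Submodule.sum_mem _ fun χ _ => Submodule.smul_mem _ _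
        (Submodule.mem_iSup_of_mem χ (hQmem χ z))
end

section
/- Let g be a Lie algebra over k and V a module over the current algebra g ⊗ k[t]. Fix a positive integer r and define, on W = V^r (the direct sum of r copies of V), the action of x ⊗ tⁿ by the lower-triangular block matrix whose (i, j) entry is C(n, i−j) times the action of x ⊗ t^{n−i+j} on V (with the conventions that x ⊗ tᵐ acts as 0 for m < 0 and C(n, s) = 0 for s < 0). Then W is a module over g ⊗ k[t]. -/
/-- The truncated-polynomial action on `W = V^r`: `x ⊗ tⁿ` acts via the lower-triangular block
matrix whose `(i,j)` entry is `C(n, i−j)` times the action of `x ⊗ t^{n−i+j}` on `V` (entries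
with `i < j` or `n − i + j < 0` are zero). Here `ρ x n` denotes the action of `x ⊗ tⁿ` on `V`. -/
def truncAction {k : Type*} [Field k] {g : Type*} [LieRing g] [LieAlgebra k g]
    {V : Type*} [AddCommGroup V] [Module k V]
    (ρ : g → ℕ → Module.End k V) (r : ℕ)
    (x : g) (n : ℕ) (w : Fin r → V) : Fin r → V :=
  fun i => ∑ j : Fin r,
    if (j : ℕ) ≤ (i : ℕ) ∧ (i : ℕ) ≤ n + (j : ℕ) then
      (Nat.choose n ((i : ℕ) - (j : ℕ))) • (ρ x (n - ((i : ℕ) - (j : ℕ)))) (w j)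
    else 0

/-- Vandermonde's identity, shifted form. -/
lemma vand_aux (m n li ii : ℕ) (h : li ≤ ii) :
    ∑ j ∈ Finset.Icc li ii, m.choose (ii - j) * n.choose (j - li)
      = (m + n).choose (ii - li) := by
  rw [Nat.add_choose_eq, Finset.Nat.sum_antidiagonal_eq_sum_range_succ_mk]
  refine Finset.sum_nbij' (fun j => ii - j) (fun a => ii - a) ?_ ?_ ?_ ?_ ?_
  · intro a ha
    simp only [Finset.mem_Icc] at ha
    simp only [Finset.mem_range]
    omega
  · intro b hb
    simp only [Finset.mem_range] at hb
    simp only [Finset.mem_Icc]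
    omega
  · intro a ha
    simp only [Finset.mem_Icc] at ha
    omega
  · intro b hb
    simp only [Finset.mem_range] at hb
    omega
  · intro a ha
    simp only [Finset.mem_Icc] at ha
    dsimp only
    have h1 : a - li = ii - li - (ii - a) := by omega
    rw [h1]

/-- The key per-column identity. -/
lemma key_aux {k : Type*} [Field k] {g : Type*} [LieRing g] [LieAlgebra k g]
    {V : Type*} [AddCommGroup V] [Module k V]
    (ρ : g → ℕ → Module.End k V)
    (hρ : ∀ (x y : g) (m n : ℕ),
      ρ ⁅x, y⁆ (m + n) = ρ x m * ρ y n - ρ y n * ρ x m)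
    (x y : g) (m n : ℕ) (v : V) (li ii : ℕ) (hle : li ≤ ii) :
    (if li ≤ ii ∧ ii ≤ m + n + li then
        ((m + n).choose (ii - li)) • (ρ ⁅x, y⁆ (m + n - (ii - li))) v
      else 0)
    = (∑ j ∈ Finset.Icc li ii,
        if (j ≤ ii ∧ ii ≤ m + j) ∧ (li ≤ j ∧ j ≤ n + li) then
          (m.choose (ii - j) * n.choose (j - li)) •
            (ρ x (m - (ii - j))) ((ρ y (n - (j - li))) v)
        else 0)
      - ∑ j ∈ Finset.Icc li ii,
        if (j ≤ ii ∧ ii ≤ n + j) ∧ (li ≤ j ∧ j ≤ m + li) then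
          (n.choose (ii - j) * m.choose (j - li)) •
            (ρ y (n - (ii - j))) ((ρ x (m - (j - li))) v)
        else 0 := by
  have reidx :
      (∑ j ∈ Finset.Icc li ii,
        if (j ≤ ii ∧ ii ≤ n + j) ∧ (li ≤ j ∧ j ≤ m + li) then
          (n.choose (ii - j) * m.choose (j - li)) •
            (ρ y (n - (ii - j))) ((ρ x (m - (j - li))) v)
        else 0)
      = ∑ j ∈ Finset.Icc li ii,
        if ii ≤ m + j ∧ j ≤ n + li then
          (m.choose (ii - j) * n.choose (j - li)) •
            (ρ y (n - (j - li))) ((ρ x (m - (ii - j))) v)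
        else 0 := by
    refine Finset.sum_nbij' (fun j => ii + li - j) (fun j => ii + li - j) ?_ ?_ ?_ ?_ ?_
    · intro a ha; simp only [Finset.mem_Icc] at ha ⊢; omega
    · intro a ha; simp only [Finset.mem_Icc] at ha ⊢; omega
    · intro a ha; simp only [Finset.mem_Icc] at ha; omega
    · intro a ha; simp only [Finset.mem_Icc] at ha; omega
    · intro a ha
      simp only [Finset.mem_Icc] at ha
      by_cases hc : (a ≤ ii ∧ ii ≤ n + a) ∧ li ≤ a ∧ a ≤ m + li
      · rw [if_pos hc, if_pos (show ii ≤ m + (ii + li - a) ∧ ii + li - a ≤ n + li by omega)]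
        have e1 : ii - (ii + li - a) = a - li := by omega
        have e2 : ii + li - a - li = ii - a := by omega
        rw [e1, e2, mul_comm]
      · rw [if_neg hc, if_neg (show ¬(ii ≤ m + (ii + li - a) ∧ ii + li - a ≤ n + li) by omega)]
  rw [reidx, ← Finset.sum_sub_distrib]
  have step : ∀ j ∈ Finset.Icc li ii,
      ((if (j ≤ ii ∧ ii ≤ m + j) ∧ (li ≤ j ∧ j ≤ n + li) then
          (m.choose (ii - j) * n.choose (j - li)) •
            (ρ x (m - (ii - j))) ((ρ y (n - (j - li))) v)
        else 0)
      - (if ii ≤ m + j ∧ j ≤ n + li then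
          (m.choose (ii - j) * n.choose (j - li)) •
            (ρ y (n - (j - li))) ((ρ x (m - (ii - j))) v)
        else 0))
      = (m.choose (ii - j) * n.choose (j - li)) •
          (ρ ⁅x, y⁆ (m + n - (ii - li))) v := by
    intro j hj
    simp only [Finset.mem_Icc] at hj
    by_cases hc : ii ≤ m + j ∧ j ≤ n + li
    · rw [if_pos ⟨⟨hj.2, hc.1⟩, hj.1, hc.2⟩, if_pos hc, ← smul_sub]
      congr 1
      have e : m + n - (ii - li) = (m - (ii - j)) + (n - (j - li)) := by omega
      rw [e, hρ x y (m - (ii - j)) (n - (j - li))]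
      simp [LinearMap.sub_apply, Module.End.mul_apply]
    · rw [if_neg (fun h2 => hc ⟨h2.1.2, h2.2.2⟩), if_neg hc, sub_zero]
      rcases not_and_or.mp hc with h' | h'
      · rw [Nat.choose_eq_zero_of_lt (show m < ii - j by omega), zero_mul, zero_smul]
      · rw [Nat.choose_eq_zero_of_lt (show n < j - li by omega), mul_zero, zero_smul]
  rw [Finset.sum_congr rfl step, ← Finset.sum_smul, vand_aux m n li ii hle]
  by_cases hc : ii ≤ m + n + li
  · rw [if_pos ⟨hle, hc⟩]
  · rw [if_neg (fun h2 => hc h2.2), Nat.choose_eq_zero_of_lt (by omega), zero_smul]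

/-- Let `g` be a Lie algebra over `k` and `V` a module over the current algebra
`g ⊗ k[t]` (with action operators `ρ x n` for `x ⊗ tⁿ` satisfying the defining compatibility).
For a positive integer `r`, the truncated action on `W = V^r` defined above satisfies the module
law, so `W` is a `g ⊗ k[t]`-module. -/
theorem stmt11 (k : Type*) [Field k] [CharZero k]
    (g : Type*) [LieRing g] [LieAlgebra k g]
    (V : Type*) [AddCommGroup V] [Module k V]
    (ρ : g → ℕ → Module.End k V)
    (hρ : ∀ (x y : g) (m n : ℕ),
      ρ ⁅x, y⁆ (m + n) = ρ x m * ρ y n - ρ y n * ρ x m)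
    (r : ℕ) (hr : 0 < r) :
    ∀ (x y : g) (m n : ℕ) (w : Fin r → V),
      truncAction ρ r ⁅x, y⁆ (m + n) w =
        truncAction ρ r x m (truncAction ρ r y n w) -
          truncAction ρ r y n (truncAction ρ r x m w) := by
  intro x y m n w
  funext i
  simp only [truncAction, Pi.sub_apply]
  have push : ∀ (a b : ℕ) (u v : g),
      (∑ j : Fin r, if (j : ℕ) ≤ (i : ℕ) ∧ (i : ℕ) ≤ a + (j : ℕ) then
          (a.choose ((i : ℕ) - (j : ℕ))) • (ρ u (a - ((i : ℕ) - (j : ℕ))))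
            (∑ l : Fin r, if (l : ℕ) ≤ (j : ℕ) ∧ (j : ℕ) ≤ b + (l : ℕ) then
                (b.choose ((j : ℕ) - (l : ℕ))) • (ρ v (b - ((j : ℕ) - (l : ℕ)))) (w l)
              else 0)
        else 0)
      = ∑ l : Fin r, ∑ j : Fin r,
          if (((j : ℕ) ≤ (i : ℕ) ∧ (i : ℕ) ≤ a + (j : ℕ)) ∧
             ((l : ℕ) ≤ (j : ℕ) ∧ (j : ℕ) ≤ b + (l : ℕ))) then
            (a.choose ((i : ℕ) - (j : ℕ)) * b.choose ((j : ℕ) - (l : ℕ))) •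
              (ρ u (a - ((i : ℕ) - (j : ℕ)))) ((ρ v (b - ((j : ℕ) - (l : ℕ)))) (w l))
          else 0 := by
    intro a b u v
    rw [Finset.sum_comm]
    refine Finset.sum_congr rfl fun j _ => ?_
    by_cases h1 : (j : ℕ) ≤ (i : ℕ) ∧ (i : ℕ) ≤ a + (j : ℕ)
    · rw [if_pos h1, map_sum, Finset.smul_sum]
      refine Finset.sum_congr rfl fun l _ => ?_
      by_cases h2 : (l : ℕ) ≤ (j : ℕ) ∧ (j : ℕ) ≤ b + (l : ℕ)
      · rw [if_pos h2, if_pos ⟨h1, h2⟩, map_nsmul, smul_smul]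
      · rw [if_neg h2, if_neg (fun hc => h2 hc.2), map_zero, smul_zero]
    · rw [if_neg h1, Finset.sum_eq_zero fun l _ => if_neg (fun hc => h1 hc.1)]
  rw [push m n x y, push n m y x, ← Finset.sum_sub_distrib]
  refine Finset.sum_congr rfl fun l _ => ?_
  have toIcc : ∀ (F : ℕ → V), (∀ j, ¬ ((l : ℕ) ≤ j ∧ j ≤ (i : ℕ)) → F j = 0) →
      (∑ j : Fin r, F (j : ℕ)) = ∑ j ∈ Finset.Icc (l : ℕ) (i : ℕ), F j := by
    intro F hF
    rw [Fin.sum_univ_eq_sum_range (fun j => F j) r]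
    refine (Finset.sum_subset ?_ ?_).symm
    · intro j hj
      simp only [Finset.mem_Icc] at hj
      simp only [Finset.mem_range]
      have := i.isLt
      omega
    · intro j _ hj
      simp only [Finset.mem_Icc] at hj
      exact hF j hj
  rw [toIcc (fun j =>
      if ((j ≤ (i : ℕ) ∧ (i : ℕ) ≤ m + j) ∧ ((l : ℕ) ≤ j ∧ j ≤ n + (l : ℕ))) then
        (m.choose ((i : ℕ) - j) * n.choose (j - (l : ℕ))) •
          (ρ x (m - ((i : ℕ) - j))) ((ρ y (n - (j - (l : ℕ)))) (w l))
      else 0) (by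
        intro j hj
        rw [if_neg]
        rintro ⟨⟨h1, -⟩, h2, -⟩
        exact hj ⟨h2, h1⟩),
    toIcc (fun j =>
      if ((j ≤ (i : ℕ) ∧ (i : ℕ) ≤ n + j) ∧ ((l : ℕ) ≤ j ∧ j ≤ m + (l : ℕ))) then
        (n.choose ((i : ℕ) - j) * m.choose (j - (l : ℕ))) •
          (ρ y (n - ((i : ℕ) - j))) ((ρ x (m - (j - (l : ℕ)))) (w l))
      else 0) (by
        intro j hj
        rw [if_neg]
        rintro ⟨⟨h1, -⟩, h2, -⟩
        exact hj ⟨h2, h1⟩)]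
  rcases le_or_gt (l : ℕ) (i : ℕ) with hle | hlt
  · exact key_aux ρ hρ x y m n (w l) (l : ℕ) (i : ℕ) hle
  · rw [if_neg (fun h2 => absurd h2.1 (by omega)), Finset.Icc_eq_empty (by omega)]
    simp
end
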